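/- Let n be odd with n = dd'·3 where d, d' > 1 are coprime to each other and to 6, and let c ∈ ℤ_n satisfy c ≡ 0 (mod 3), c ≡ 1 (mod d), c ≡ -1 (mod d'). Setting λ = c + 1 - δn₀ and μ = c - 1 + δn₀ in ℤ_n (where n₀ = dd' and δ ∈ {±1} with n₀ ≡ δ mod 3), we have gcd(λ, n) = 3d' and gcd(μ, n) = 3d. -/

import Mathlib

lemma aux_gcd_16 (a b : ℕ) (ha6 : Nat.Coprime a 6) (x : ℤ)
    (h3 : (3:ℤ) ∣ x) (hax : (a:ℤ) ∣ x) (hbx : IsCoprime x (b:ℤ)) :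
    Int.gcd x (3*((a:ℤ)*(b:ℤ))) = 3 * a := by
  have h3a : Nat.Coprime 3 a :=
    (Nat.Coprime.coprime_dvd_right (by norm_num : 3 ∣ 6) ha6).symm
  have h3a' : IsCoprime (3:ℤ) (a:ℤ) := by
    exact_mod_cast Nat.isCoprime_iff_coprime.mpr h3a
  have hdvd : ((3*a : ℕ) : ℤ) ∣ x := by push_cast; exact h3a'.mul_dvd h3 hax
  have hdvdn : ((3*a : ℕ) : ℤ) ∣ (3*((a:ℤ)*(b:ℤ))) := ⟨b, by push_cast; ring⟩
  have h1 : 3*a ∣ Int.gcd x (3*((a:ℤ)*(b:ℤ))) :=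
    Int.natCast_dvd_natCast.mp (Int.dvd_coe_gcd hdvd hdvdn)
  set g := Int.gcd x (3*((a:ℤ)*(b:ℤ))) with hg
  have hgx : (g : ℤ) ∣ x := Int.gcd_dvd_left _ _
  have hgcop : Nat.Coprime g b := by
    have : IsCoprime (g:ℤ) (b:ℤ) := hbx.of_isCoprime_of_dvd_left hgx
    exact Nat.isCoprime_iff_coprime.mp this
  have hgn : g ∣ (3*a)*b := by
    have : (g:ℤ) ∣ (((3*a)*b : ℕ) : ℤ) := by
      have := Int.gcd_dvd_right (a := x) (b := 3*((a:ℤ)*(b:ℤ)))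
      convert this using 1
      push_cast; ring
    exact_mod_cast this
  exact Nat.dvd_antisymm (hgcop.dvd_of_dvd_mul_right hgn) h1

/-- gcd computation from the proof of Lemma 5.4: with λ = c + 1 - δn₀ and
μ = c - 1 + δn₀ one has gcd(λ, n) = 3d' and gcd(μ, n) = 3d. -/
theorem stmt_16 (d d' n₀ n : ℕ) (hd : 1 < d) (hd' : 1 < d')
    (hcop : Nat.Coprime d d') (h6 : Nat.Coprime d 6) (h6' : Nat.Coprime d' 6)
    (hn₀ : n₀ = d * d') (hn : n = 3 * n₀) (hodd : Odd n)
    (δ : ℤ) (hδ : δ = 1 ∨ δ = -1) (hδn₀ : (n₀ : ℤ) ≡ δ [ZMOD 3])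
    (c : ℤ) (hc3 : c ≡ 0 [ZMOD 3]) (hcd : c ≡ 1 [ZMOD (d : ℤ)])
    (hcd' : c ≡ -1 [ZMOD (d' : ℤ)]) :
    Int.gcd (c + 1 - δ * (n₀ : ℤ)) (n : ℤ) = 3 * d' ∧
    Int.gcd (c - 1 + δ * (n₀ : ℤ)) (n : ℤ) = 3 * d := by
  have hdn₀ : (d:ℤ) ∣ (n₀:ℤ) := ⟨d', by exact_mod_cast congrArg Nat.cast hn₀⟩
  have hd'n₀ : (d':ℤ) ∣ (n₀:ℤ) := ⟨d, by push_cast [hn₀]; ring⟩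
  have hδδ : δ * δ = 1 := by rcases hδ with h | h <;> subst h <;> norm_num
  -- 3 divides λ and μ
  have h3L : (3:ℤ) ∣ (c + 1 - δ * n₀) := by
    have : c + 1 - δ * n₀ ≡ 0 + 1 - δ * δ [ZMOD 3] :=
      (hc3.add_right 1).sub ((Int.ModEq.refl δ).mul hδn₀)
    rw [hδδ] at this
    simpa using Int.modEq_zero_iff_dvd.mp (by simpa using this)
  have h3M : (3:ℤ) ∣ (c - 1 + δ * n₀) := by
    have : c - 1 + δ * n₀ ≡ 0 - 1 + δ * δ [ZMOD 3] :=
      (hc3.sub_right 1).add ((Int.ModEq.refl δ).mul hδn₀)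
    rw [hδδ] at this
    simpa using Int.modEq_zero_iff_dvd.mp (by simpa using this)
  -- d' divides λ, d divides μ
  have hdpL : (d':ℤ) ∣ (c + 1 - δ * n₀) := by
    have : c + 1 - δ * n₀ ≡ -1 + 1 - δ * 0 [ZMOD (d':ℤ)] :=
      (hcd'.add_right 1).sub ((Int.ModEq.refl δ).mul
        (Int.modEq_zero_iff_dvd.mpr hd'n₀))
    exact Int.modEq_zero_iff_dvd.mp (by simpa using this)
  have hdM : (d:ℤ) ∣ (c - 1 + δ * n₀) := by
    have : c - 1 + δ * n₀ ≡ 1 - 1 + δ * 0 [ZMOD (d:ℤ)] :=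
      (hcd.sub_right 1).add ((Int.ModEq.refl δ).mul
        (Int.modEq_zero_iff_dvd.mpr hdn₀))
    exact Int.modEq_zero_iff_dvd.mp (by simpa using this)
  -- coprimality: λ with d, μ with d'
  have h2d : IsCoprime (2:ℤ) (d:ℤ) := by
    have : Nat.Coprime 2 d :=
      (Nat.Coprime.coprime_dvd_right (by norm_num : 2 ∣ 6) h6).symm
    exact_mod_cast Nat.isCoprime_iff_coprime.mpr this
  have h2d' : IsCoprime (2:ℤ) (d':ℤ) := by
    have : Nat.Coprime 2 d' :=
      (Nat.Coprime.coprime_dvd_right (by norm_num : 2 ∣ 6) h6').symm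
    exact_mod_cast Nat.isCoprime_iff_coprime.mpr this
  have hLd : IsCoprime (c + 1 - δ * n₀) (d:ℤ) := by
    have hmod : c + 1 - δ * n₀ ≡ 1 + 1 - δ * 0 [ZMOD (d:ℤ)] :=
      (hcd.add_right 1).sub ((Int.ModEq.refl δ).mul
        (Int.modEq_zero_iff_dvd.mpr hdn₀))
    obtain ⟨k, hk⟩ := (Int.ModEq.dvd hmod)
    have : c + 1 - δ * n₀ = 2 + (d:ℤ) * (-k) := by linarith [hk]
    rw [this]
    exact h2d.add_mul_left_left (-k)
  have hMdp : IsCoprime (c - 1 + δ * n₀) (d':ℤ) := by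
    have hmod : c - 1 + δ * n₀ ≡ -1 - 1 + δ * 0 [ZMOD (d':ℤ)] :=
      (hcd'.sub_right 1).add ((Int.ModEq.refl δ).mul
        (Int.modEq_zero_iff_dvd.mpr hd'n₀))
    obtain ⟨k, hk⟩ := (Int.ModEq.dvd hmod)
    have : c - 1 + δ * n₀ = -2 + (d':ℤ) * (-k) := by linarith [hk]
    rw [this]
    exact ((h2d'.neg_left).add_mul_left_left (-k))
  constructor
  · have := aux_gcd_16 d' d h6' (c + 1 - δ * n₀) h3L hdpL hLd
    have hne : (n:ℤ) = 3*((d':ℤ)*(d:ℤ)) := by push_cast [hn, hn₀]; ring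
    rw [hne]; exact this
  · have := aux_gcd_16 d d' h6 (c - 1 + δ * n₀) h3M hdM hMdp
    have hne : (n:ℤ) = 3*((d:ℤ)*(d':ℤ)) := by push_cast [hn, hn₀]; ring
    rw [hne]; exact this
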